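/- arXiv:2601.08362 — 2 statements merged into one kernel-verified Lean document; each statement's English description precedes it below -/
import Mathlib

section
/- Let z̄ = (x̄,ȳ) ∈ ℝ^m × S^n. Consider the statements: (a) the S-SOSC holds at z̄; (b) there exists an open neighborhood U of z̄ in ℝ^m × S^n such that the W-SOC holds uniformly on U; (c) there exists an open neighborhood V of ȳ in S^n such that the W-SOC holds uniformly on {x̄} × V. Then (a) implies (b), and (b) implies (c); moreover, if the SONC holds at z̄, then (a), (b) and (c) are equivalent. -/
open scoped Classical RealInnerProductSpace
open Matrix Set

noncomputable section

abbrev Mat (n : ℕ) : Type := Matrix (Fin n) (Fin n) ℝ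

abbrev Em (m : ℕ) : Type := EuclideanSpace ℝ (Fin m)

attribute [instance] Matrix.frobeniusNormedAddCommGroup Matrix.frobeniusNormedSpace

/-- The trace (Frobenius) inner product `⟨A,B⟩ = tr(AᵀB)` on matrices; for symmetric
matrices this is `tr(AB)`. -/
def minner {n : ℕ} (A B : Mat n) : ℝ := (Aᵀ * B).trace

/-- `P` is an orthogonal matrix. -/
def IsOrthoMat {n : ℕ} (P : Mat n) : Prop := P * Pᵀ = 1 ∧ Pᵀ * P = 1

/-- `(P, lam)` is an eigenvalue decomposition of `A` with orthogonal `P` and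
nonincreasing eigenvalue vector `lam`: `A = P·Diag(lam)·Pᵀ`. -/
def IsEigDecomp {n : ℕ} (A P : Mat n) (lam : Fin n → ℝ) : Prop :=
  IsOrthoMat P ∧ Antitone lam ∧ A = P * Matrix.diagonal lam * Pᵀ

/-- The stratum `M_{p,q}` of symmetric matrices with exactly `p` positive and `q` negative
eigenvalues. -/
def stratum (n p q : ℕ) : Set (Mat n) :=
  {A | ∃ P lam, IsEigDecomp A P lam ∧
    {i : Fin n | 0 < lam i}.ncard = p ∧ {i : Fin n | lam i < 0}.ncard = q}

/-- The metric projection `Π₊` onto the positive semidefinite cone (defined through an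
eigenvalue decomposition; the value is independent of the choice of decomposition). -/
noncomputable def piPlus {n : ℕ} (A : Mat n) : Mat n :=
  if h : ∃ P lam, IsEigDecomp A P lam then
    h.choose * Matrix.diagonal (fun i => max (h.choose_spec.choose i) 0) * h.chooseᵀ
  else 0

variable {m n : ℕ}

/-- `G(z) = g(x) + y`. -/
def Gmap (g : Em m → Mat n) (z : Em m × Mat n) : Mat n := g z.1 + z.2

/-- The adjoint `∇g(x) : Sⁿ → ℝᵐ` of the derivative `g'(x)`, characterized by
`⟨∇g(x)H, v⟩ = ⟨H, g'(x)v⟩`. -/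
def gradg (g : Em m → Mat n) (x : Em m) (H : Mat n) : Em m :=
  (EuclideanSpace.equiv (Fin m) ℝ).symm
    fun k => (Hᵀ * fderiv ℝ g x (EuclideanSpace.single k 1)).trace

/-- The Lagrangian `L(x,y) = f(x) + ⟨y, g(x)⟩`. -/
def Lfun (f : Em m → ℝ) (g : Em m → Mat n) (x : Em m) (y : Mat n) : ℝ :=
  f x + minner y (g x)

/-- The Hessian `∇²ₓₓL(x,y)` of `x ↦ L(x,y)`, as a continuous linear map `ℝᵐ → ℝᵐ`. -/
def hessL (f : Em m → ℝ) (g : Em m → Mat n) (x : Em m) (y : Mat n) : Em m →L[ℝ] Em m :=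
  fderiv ℝ (fun u => gradient (fun w => Lfun f g w y) u) x

/-- The KKT mapping `F(z) = (∇f(x) + ∇g(x)y, −g(x) + Π₊(G(z)))`. -/
def KKTF (f : Em m → ℝ) (g : Em m → Mat n) (z : Em m × Mat n) : Em m × Mat n :=
  (gradient f z.1 + gradg g z.1 z.2, - g z.1 + piPlus (Gmap g z))

/-- The lifted stratum `M̃_{p,q} = {z = (x,y) ∈ ℝᵐ × Sⁿ : G(z) ∈ M_{p,q}}`. -/
def lstratum (g : Em m → Mat n) (p q : ℕ) : Set (Em m × Mat n) :=
  {z | z.2.IsSymm ∧ Gmap g z ∈ stratum n p q}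

/-- The norm `‖(u,H)‖ = sqrt(‖u‖² + ‖H‖²)` on `ℝᵐ × Sⁿ` (Frobenius norm on matrices). -/
def pnorm {m n : ℕ} (w : Em m × Mat n) : ℝ := Real.sqrt (‖w.1‖ ^ 2 + ‖w.2‖ ^ 2)

/-- The weak strict Robinson constraint qualification (W-SRCQ) at `z`:
`g'(x)[ℝᵐ] + {PBPᵀ : B ∈ Sⁿ, B_{βγ} = 0, B_{γγ} = 0} = Sⁿ`
(for any eigenvalue decomposition `(P, lam)` of `G(z)`; independent of the choice). -/
def WSRCQ (g : Em m → Mat n) (z : Em m × Mat n) : Prop :=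
  ∀ P lam, IsEigDecomp (Gmap g z) P lam →
    ∀ C : Mat n, C.IsSymm →
      ∃ (v : Em m) (B : Mat n), B.IsSymm ∧
        (∀ i j, lam i = 0 → lam j < 0 → B i j = 0) ∧
        (∀ i j, lam i < 0 → lam j < 0 → B i j = 0) ∧
        C = fderiv ℝ g z.1 v + P * B * Pᵀ

/-- The constraint nondegeneracy at `z`:
`g'(x)[ℝᵐ] + {PBPᵀ : B ∈ Sⁿ, B_{ββ} = 0, B_{βγ} = 0, B_{γγ} = 0} = Sⁿ`. -/
def CNondeg (g : Em m → Mat n) (z : Em m × Mat n) : Prop :=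
  ∀ P lam, IsEigDecomp (Gmap g z) P lam →
    ∀ C : Mat n, C.IsSymm →
      ∃ (v : Em m) (B : Mat n), B.IsSymm ∧
        (∀ i j, lam i = 0 → lam j = 0 → B i j = 0) ∧
        (∀ i j, lam i = 0 → lam j < 0 → B i j = 0) ∧
        (∀ i j, lam i < 0 → lam j < 0 → B i j = 0) ∧
        C = fderiv ℝ g z.1 v + P * B * Pᵀ

/-- The strict Robinson constraint qualification (SRCQ) at a KKT pair `z`:
`g'(x)[ℝᵐ] + {PBPᵀ : B ∈ Sⁿ, B_{ββ} ⪰ 0, B_{βγ} = 0, B_{γγ} = 0} = Sⁿ`. -/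
def SRCQ (g : Em m → Mat n) (z : Em m × Mat n) : Prop :=
  ∀ P lam, IsEigDecomp (Gmap g z) P lam →
    ∀ C : Mat n, C.IsSymm →
      ∃ (v : Em m) (B : Mat n), B.IsSymm ∧
        (∀ u : Fin n → ℝ, (∀ i, lam i ≠ 0 → u i = 0) →
          0 ≤ ∑ i, ∑ j, u i * B i j * u j) ∧
        (∀ i j, lam i = 0 → lam j < 0 → B i j = 0) ∧
        (∀ i j, lam i < 0 → lam j < 0 → B i j = 0) ∧
        C = fderiv ℝ g z.1 v + P * B * Pᵀ

/-- The quadratic form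
`Q(z,v) = ⟨v, ∇²ₓₓL(x,y)v⟩ + 2·Σ_{i∈α}Σ_{j∈γ} (−λⱼ/λᵢ)·([Pᵀ(g'(x)v)P]_{ij})²`. -/
def Qform (f : Em m → ℝ) (g : Em m → Mat n) (z : Em m × Mat n)
    (P : Mat n) (lam : Fin n → ℝ) (v : Em m) : ℝ :=
  ⟪v, hessL f g z.1 z.2 v⟫ +
    2 * ∑ i : Fin n, ∑ j : Fin n,
      (if 0 < lam i ∧ lam j < 0 then
        (-lam j / lam i) * ((Pᵀ * fderiv ℝ g z.1 v * P) i j) ^ 2 else 0)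

/-- `v ∈ appl(z)`: the blocks `ββ`, `βγ`, `γγ` of `Pᵀ(g'(x)v)P` vanish. -/
def memAppl (g : Em m → Mat n) (z : Em m × Mat n)
    (P : Mat n) (lam : Fin n → ℝ) (v : Em m) : Prop :=
  (∀ i j, lam i = 0 → lam j = 0 → (Pᵀ * fderiv ℝ g z.1 v * P) i j = 0) ∧
  (∀ i j, lam i = 0 → lam j < 0 → (Pᵀ * fderiv ℝ g z.1 v * P) i j = 0) ∧
  (∀ i j, lam i < 0 → lam j < 0 → (Pᵀ * fderiv ℝ g z.1 v * P) i j = 0)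

/-- `v ∈ app(z)`: the blocks `βγ`, `γγ` of `Pᵀ(g'(x)v)P` vanish. -/
def memApp (g : Em m → Mat n) (z : Em m × Mat n)
    (P : Mat n) (lam : Fin n → ℝ) (v : Em m) : Prop :=
  (∀ i j, lam i = 0 → lam j < 0 → (Pᵀ * fderiv ℝ g z.1 v * P) i j = 0) ∧
  (∀ i j, lam i < 0 → lam j < 0 → (Pᵀ * fderiv ℝ g z.1 v * P) i j = 0)

/-- The weak second order condition (W-SOC) at `z`: `Q(z,v) ≠ 0` for every nonzero
`v ∈ appl(z)`. -/
def WSOC (f : Em m → ℝ) (g : Em m → Mat n) (z : Em m × Mat n) : Prop :=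
  ∀ P lam, IsEigDecomp (Gmap g z) P lam →
    ∀ v : Em m, v ≠ 0 → memAppl g z P lam v → Qform f g z P lam v ≠ 0

/-- The strong second order sufficient condition (S-SOSC) at `z`: `Q(z,v) > 0` for every
nonzero `v ∈ app(z)`. -/
def SSOSC (f : Em m → ℝ) (g : Em m → Mat n) (z : Em m × Mat n) : Prop :=
  ∀ P lam, IsEigDecomp (Gmap g z) P lam →
    ∀ v : Em m, v ≠ 0 → memApp g z P lam v → 0 < Qform f g z P lam v

/-- The second order necessary condition (SONC) at `z`. -/
def SONC (f : Em m → ℝ) (g : Em m → Mat n) (z : Em m × Mat n) : Prop :=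
  ∀ P lam, IsEigDecomp (Gmap g z) P lam →
    ∀ v : Em m, v ≠ 0 →
      (∀ u : Fin n → ℝ, (∀ i, lam i ≠ 0 → u i = 0) →
        0 ≤ ∑ i, ∑ j, u i * (Pᵀ * fderiv ℝ g z.1 v * P) i j * u j) →
      memApp g z P lam v → 0 ≤ Qform f g z P lam v

/-- The W-SOC holds uniformly on a set `S`: there is `c > 0` with `Q(z,v) ≥ c‖v‖²` for
every `z ∈ S` (in `ℝᵐ × Sⁿ`) and every `v ∈ appl(z)`. -/
def UnifWSOC (f : Em m → ℝ) (g : Em m → Mat n) (S : Set (Em m × Mat n)) : Prop :=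
  ∃ c : ℝ, 0 < c ∧ ∀ z ∈ S, z.2.IsSymm →
    ∀ P lam, IsEigDecomp (Gmap g z) P lam →
      ∀ v : Em m, memAppl g z P lam v → c * ‖v‖ ^ 2 ≤ Qform f g z P lam v

/-- `H ∈ T_z`: `H ∈ Sⁿ` with `(PᵀHP)_{ββ} = 0`. -/
def memTz {n : ℕ} (P : Mat n) (lam : Fin n → ℝ) (H : Mat n) : Prop :=
  H.IsSymm ∧ ∀ i j, lam i = 0 → lam j = 0 → (Pᵀ * H * P) i j = 0

/-- `Δ ∈ N_{G(z)}M_{p,q}`: `Δ ∈ Sⁿ` and `(PᵀΔP)_{ij} = 0` whenever `i ∉ β` or `j ∉ β`. -/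
def memNormal {n : ℕ} (P : Mat n) (lam : Fin n → ℝ) (Δ : Mat n) : Prop :=
  Δ.IsSymm ∧ ∀ i j, (lam i ≠ 0 ∨ lam j ≠ 0) → (Pᵀ * Δ * P) i j = 0

/-- The map `ξ_z : T_z → Sⁿ`, `ξ_z(H) = P·M·Pᵀ`. -/
def xiMap {n : ℕ} (P : Mat n) (lam : Fin n → ℝ) (H : Mat n) : Mat n :=
  P * (Matrix.of fun i j =>
    if 0 < lam i ∧ 0 < lam j then (Pᵀ * H * P) i j
    else if 0 < lam i ∧ lam j = 0 then (Pᵀ * H * P) i j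
    else if lam i = 0 ∧ 0 < lam j then (Pᵀ * H * P) i j
    else if 0 < lam i ∧ lam j < 0 then (lam i / (lam i - lam j)) * (Pᵀ * H * P) i j
    else if lam i < 0 ∧ 0 < lam j then (lam j / (lam j - lam i)) * (Pᵀ * H * P) i j
    else 0) * Pᵀ

/-- The linear map `𝒜_z(v,H) = (∇²ₓₓL(x,y)v − ∇g(x)(g'(x)v) + ∇g(x)H, −g'(x)v + ξ_z(H))`. -/
def Amap (f : Em m → ℝ) (g : Em m → Mat n) (z : Em m × Mat n)
    (P : Mat n) (lam : Fin n → ℝ) (v : Em m) (H : Mat n) : Em m × Mat n :=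
  (hessL f g z.1 z.2 v - gradg g z.1 (fderiv ℝ g z.1 v) + gradg g z.1 H,
    - fderiv ℝ g z.1 v + xiMap P lam H)

/-- The positive inertia index of `A` is `p`. -/
def posInertiaIs {n : ℕ} (A : Mat n) (p : ℕ) : Prop :=
  ∃ P lam, IsEigDecomp A P lam ∧ {i : Fin n | 0 < lam i}.ncard = p

/-- The negative inertia index of `A` is `q`. -/
def negInertiaIs {n : ℕ} (A : Mat n) (q : ℕ) : Prop :=
  ∃ P lam, IsEigDecomp A P lam ∧ {i : Fin n | lam i < 0}.ncard = q

end

section Aux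
variable {m n : ℕ}

theorem frob_sq_eq (A : Mat n) : ‖A‖ ^ 2 = ∑ i, ∑ j, (A i j) ^ 2 := by
  rw [Matrix.frobenius_norm_def]
  rw [← Real.rpow_natCast _ 2, ← Real.rpow_mul (by positivity)]
  norm_num

theorem entry_abs_le (A : Mat n) (i j : Fin n) : |A i j| ≤ ‖A‖ := by
  have h1 : (A i j) ^ 2 ≤ ‖A‖ ^ 2 := by
    rw [frob_sq_eq]
    calc (A i j)^2 ≤ ∑ j', (A i j')^2 :=
          Finset.single_le_sum (f := fun j' => (A i j')^2) (fun _ _ => sq_nonneg _) (Finset.mem_univ j)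
      _ ≤ ∑ i', ∑ j', (A i' j')^2 :=
          Finset.single_le_sum (f := fun i' => ∑ j', (A i' j')^2)
            (fun _ _ => Finset.sum_nonneg fun _ _ => sq_nonneg _) (Finset.mem_univ i)
  nlinarith [abs_nonneg (A i j), norm_nonneg A, sq_abs (A i j)]

theorem entry_tendsto {A : ℕ → Mat n} {B : Mat n}
    (h : Filter.Tendsto A Filter.atTop (nhds B)) (i j : Fin n) :
    Filter.Tendsto (fun k => A k i j) Filter.atTop (nhds (B i j)) := by
  replace h := Metric.tendsto_atTop.mp h
  rw [Metric.tendsto_atTop]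
  intro ε hε
  obtain ⟨N, hN⟩ := h ε hε
  refine ⟨N, fun k hk => ?_⟩
  have := entry_abs_le (A k - B) i j
  have h2 : (A k - B) i j = A k i j - B i j := by simp [Matrix.sub_apply]
  rw [h2] at this
  calc dist (A k i j) (B i j) = |A k i j - B i j| := by rw [Real.dist_eq]
    _ ≤ ‖A k - B‖ := this
    _ = dist (A k) B := by rw [dist_eq_norm]
    _ < ε := hN k hk

end Aux
section Aux2
variable {m n : ℕ}

theorem frob_sq_eq_trace (A : Mat n) : ‖A‖ ^ 2 = (Aᵀ * A).trace := by
  rw [frob_sq_eq, Matrix.trace]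
  simp only [Matrix.diag_apply, Matrix.mul_apply, Matrix.transpose_apply]
  rw [Finset.sum_comm]
  congr 1; ext i; congr 1; ext j; ring

theorem eig_sq_sum {A P : Mat n} {lam : Fin n → ℝ} (h : IsEigDecomp A P lam) :
    ∑ i, (lam i) ^ 2 = ‖A‖ ^ 2 := by
  obtain ⟨⟨hP1, hP2⟩, _, hA⟩ := h
  rw [frob_sq_eq_trace, hA]
  have ht : (P * Matrix.diagonal lam * Pᵀ)ᵀ = P * Matrix.diagonal lam * Pᵀ := by
    simp [Matrix.transpose_mul, Matrix.diagonal_transpose, Matrix.mul_assoc]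
  rw [ht]
  have : P * Matrix.diagonal lam * Pᵀ * (P * Matrix.diagonal lam * Pᵀ)
      = P * (Matrix.diagonal lam * Matrix.diagonal lam) * Pᵀ := by
    rw [Matrix.mul_assoc (P * Matrix.diagonal lam) Pᵀ, ← Matrix.mul_assoc Pᵀ (P * Matrix.diagonal lam),
      ← Matrix.mul_assoc Pᵀ P, hP2, Matrix.one_mul, ← Matrix.mul_assoc, Matrix.mul_assoc P]
  rw [this, Matrix.trace_mul_cycle, ← Matrix.mul_assoc, hP2, Matrix.one_mul,
    Matrix.diagonal_mul_diagonal, Matrix.trace_diagonal]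
  congr 1; ext i; ring

theorem eig_abs_le {A P : Mat n} {lam : Fin n → ℝ} (h : IsEigDecomp A P lam) (i : Fin n) :
    |lam i| ≤ ‖A‖ := by
  have h1 : (lam i)^2 ≤ ‖A‖^2 := by
    rw [← eig_sq_sum h]
    exact Finset.single_le_sum (f := fun i => (lam i)^2) (fun _ _ => sq_nonneg _) (Finset.mem_univ i)
  nlinarith [abs_nonneg (lam i), norm_nonneg A, sq_abs (lam i)]

theorem ortho_norm {P : Mat n} (h : IsOrthoMat P) : ‖P‖ ≤ Real.sqrt n := by
  have h1 : ‖P‖^2 = (n : ℝ) := by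
    rw [frob_sq_eq_trace, h.2, Matrix.trace_one]
    simp
  have : ‖P‖ = Real.sqrt n := by
    rw [← h1, Real.sqrt_sq (norm_nonneg P)]
  exact this.le

end Aux2
section Hess
variable {m n : ℕ}

/-- `A ↦ tr(yᵀA)` as a continuous linear map. -/
noncomputable def traceCLM (n : ℕ) (y : Mat n) : Mat n →L[ℝ] ℝ :=
  LinearMap.toContinuousLinearMap
  { toFun := fun A => (yᵀ * A).trace
    map_add' := fun A B => by
      show (yᵀ * (A + B)).trace = (yᵀ * A).trace + (yᵀ * B).trace
      rw [Matrix.mul_add, Matrix.trace_add]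
    map_smul' := fun c A => by
      show (yᵀ * (c • A)).trace = c • (yᵀ * A).trace
      rw [Matrix.mul_smul, Matrix.trace_smul] }

@[simp] theorem traceCLM_apply (y A : Mat n) : traceCLM n y A = (yᵀ * A).trace := rfl

theorem Lfun_eq (f : Em m → ℝ) (g : Em m → Mat n) (y : Mat n) :
    (fun w => Lfun f g w y) = fun w => f w + traceCLM n y (g w) := rfl

theorem hasFDerivAt_Lfun (f : Em m → ℝ) (g : Em m → Mat n)
    (hf : ContDiff ℝ 2 f) (hg : ContDiff ℝ 2 g) (y : Mat n) (u : Em m) :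
    HasFDerivAt (fun w => Lfun f g w y)
      (fderiv ℝ f u + (traceCLM n y).comp (fderiv ℝ g u)) u := by
  rw [Lfun_eq]
  exact ((hf.differentiable two_ne_zero u).hasFDerivAt).add
    (((traceCLM n y).hasFDerivAt).comp u ((hg.differentiable two_ne_zero u).hasFDerivAt))

/-- The duality isometry `(Em m →L[ℝ] ℝ) ≃ₗᵢ[ℝ] Em m` (real version of `toDual.symm`). -/
noncomputable def dualIso (m : ℕ) : (Em m →L[ℝ] ℝ) ≃ₗᵢ[ℝ] Em m where
  toLinearEquiv :=
    { toFun := fun L => (InnerProductSpace.toDual ℝ (Em m)).symm L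
      invFun := fun v => InnerProductSpace.toDual ℝ (Em m) v
      map_add' := fun L L' => by simp
      map_smul' := fun c L => by simp [starRingEnd_apply]
      left_inv := fun L => by simp
      right_inv := fun v => by simp }
  norm_map' := fun L => by simp

@[simp] theorem dualIso_apply (L : Em m →L[ℝ] ℝ) :
    dualIso m L = (InnerProductSpace.toDual ℝ (Em m)).symm L := rfl

/-- The explicit formula for the Hessian of the Lagrangian. -/
noncomputable def hessFormula (f : Em m → ℝ) (g : Em m → Mat n)
    (z : Em m × Mat n) : Em m →L[ℝ] Em m :=
  ((dualIso m : (Em m →L[ℝ] ℝ) ≃ₗᵢ[ℝ] Em m) : (Em m →L[ℝ] ℝ) →L[ℝ] Em m).comp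
    (fderiv ℝ (fderiv ℝ f) z.1 +
      (ContinuousLinearMap.compL ℝ (Em m) (Mat n) ℝ (traceCLM n z.2)).comp
        (fderiv ℝ (fderiv ℝ g) z.1))

theorem hessL_eq_formula (f : Em m → ℝ) (g : Em m → Mat n)
    (hf : ContDiff ℝ 2 f) (hg : ContDiff ℝ 2 g) (z : Em m × Mat n) :
    hessL f g z.1 z.2 = hessFormula f g z := by
  have key : (fun u => gradient (fun w => Lfun f g w z.2) u)
      = ((dualIso m) ∘
          fun u => fderiv ℝ f u + (traceCLM n z.2).comp (fderiv ℝ g u)) := by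
    funext u
    show (InnerProductSpace.toDual ℝ (Em m)).symm (fderiv ℝ (fun w => Lfun f g w z.2) u) = _
    rw [(hasFDerivAt_Lfun f g hf hg z.2 u).fderiv]
    rfl
  rw [hessL, key, LinearIsometryEquiv.comp_fderiv]
  have hF1 : HasFDerivAt (fun u => fderiv ℝ f u) (fderiv ℝ (fderiv ℝ f) z.1) z.1 :=
    (((hf.fderiv_right (m := 1) (by norm_num)).differentiable one_ne_zero) z.1).hasFDerivAt
  have hG1 : HasFDerivAt (fun u => fderiv ℝ g u) (fderiv ℝ (fderiv ℝ g) z.1) z.1 :=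
    (((hg.fderiv_right (m := 1) (by norm_num)).differentiable one_ne_zero) z.1).hasFDerivAt
  have hF2 : HasFDerivAt (fun u => (traceCLM n z.2).comp (fderiv ℝ g u))
      ((ContinuousLinearMap.compL ℝ (Em m) (Mat n) ℝ (traceCLM n z.2)).comp
        (fderiv ℝ (fderiv ℝ g) z.1)) z.1 :=
    ((ContinuousLinearMap.compL ℝ (Em m) (Mat n) ℝ (traceCLM n z.2)).hasFDerivAt).comp z.1 hG1
  rw [hessFormula]
  congr 1
  exact (hF1.add hF2).fderiv

theorem continuous_hessFormula (f : Em m → ℝ) (g : Em m → Mat n)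
    (hf : ContDiff ℝ 2 f) (hg : ContDiff ℝ 2 g) :
    Continuous fun z : Em m × Mat n => hessFormula f g z := by
  have hcf : Continuous fun z : Em m × Mat n => fderiv ℝ (fderiv ℝ f) z.1 :=
    ((hf.fderiv_right (m := 1) (by norm_num)).continuous_fderiv one_ne_zero).comp continuous_fst
  have hcg : Continuous fun z : Em m × Mat n => fderiv ℝ (fderiv ℝ g) z.1 :=
    ((hg.fderiv_right (m := 1) (by norm_num)).continuous_fderiv one_ne_zero).comp continuous_fst
  have htr : Continuous fun y : Mat n =>
      (ContinuousLinearMap.compL ℝ (Em m) (Mat n) ℝ (traceCLM n y)) := by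
    have : Continuous fun y : Mat n => traceCLM n y := by
      exact LinearMap.continuous_of_finiteDimensional
        ({ toFun := fun y => traceCLM n y
           map_add' := fun y y' => by
             apply ContinuousLinearMap.ext; intro A
             simp [Matrix.transpose_add, Matrix.add_mul]
           map_smul' := fun c y => by
             apply ContinuousLinearMap.ext; intro A
             simp [Matrix.transpose_smul, Matrix.smul_mul] } : Mat n →ₗ[ℝ] (Mat n →L[ℝ] ℝ))
    exact (ContinuousLinearMap.compL ℝ (Em m) (Mat n) ℝ).continuous.comp this
  have hcomp : Continuous fun z : Em m × Mat n =>
      (ContinuousLinearMap.compL ℝ (Em m) (Mat n) ℝ (traceCLM n z.2)).comp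
        (fderiv ℝ (fderiv ℝ g) z.1) :=
    isBoundedBilinearMap_comp.continuous.comp ((htr.comp continuous_snd).prodMk hcg)
  unfold hessFormula
  have houter : Continuous fun C : Em m →L[ℝ] (Em m →L[ℝ] ℝ) =>
      ((dualIso m : (Em m →L[ℝ] ℝ) ≃ₗᵢ[ℝ] Em m) : (Em m →L[ℝ] ℝ) →L[ℝ] Em m).comp C :=
    (ContinuousLinearMap.isBoundedLinearMap_comp_left _).continuous
  exact houter.comp (hcf.add hcomp)

end Hess
section Qf
variable {m n : ℕ}

theorem Qform_hess (f : Em m → ℝ) (g : Em m → Mat n)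
    (hf : ContDiff ℝ 2 f) (hg : ContDiff ℝ 2 g) (z : Em m × Mat n)
    (P : Mat n) (lam : Fin n → ℝ) (v : Em m) :
    Qform f g z P lam v = ⟪v, hessFormula f g z v⟫ +
      2 * ∑ i : Fin n, ∑ j : Fin n,
        (if 0 < lam i ∧ lam j < 0 then
          (-lam j / lam i) * ((Pᵀ * fderiv ℝ g z.1 v * P) i j) ^ 2 else 0) := by
  rw [Qform, hessL_eq_formula f g hf hg]

theorem Qform_zero (f : Em m → ℝ) (g : Em m → Mat n) (z : Em m × Mat n)
    (P : Mat n) (lam : Fin n → ℝ) :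
    Qform f g z P lam 0 = 0 := by
  rw [Qform]
  simp [Matrix.mul_apply]

theorem Mmat_smul (g : Em m → Mat n) (z : Em m × Mat n) (P : Mat n) (c : ℝ) (v : Em m)
    (i j : Fin n) :
    (Pᵀ * fderiv ℝ g z.1 (c • v) * P) i j = c * ((Pᵀ * fderiv ℝ g z.1 v * P) i j) := by
  rw [_root_.map_smul]
  simp only [Matrix.mul_apply, Matrix.smul_apply, smul_eq_mul]
  rw [Finset.mul_sum]
  apply Finset.sum_congr rfl; intro a _
  rw [Finset.sum_mul, Finset.sum_mul, Finset.mul_sum]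
  apply Finset.sum_congr rfl; intro x _
  ring

theorem Qform_smul (f : Em m → ℝ) (g : Em m → Mat n) (z : Em m × Mat n)
    (P : Mat n) (lam : Fin n → ℝ) (c : ℝ) (v : Em m) :
    Qform f g z P lam (c • v) = c ^ 2 * Qform f g z P lam v := by
  rw [Qform, Qform, _root_.map_smul, real_inner_smul_left, real_inner_smul_right]
  have hsum : (∑ i : Fin n, ∑ j : Fin n,
        (if 0 < lam i ∧ lam j < 0 then
          (-lam j / lam i) * ((Pᵀ * fderiv ℝ g z.1 (c • v) * P) i j) ^ 2 else 0))
      = c^2 * ∑ i : Fin n, ∑ j : Fin n,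
        (if 0 < lam i ∧ lam j < 0 then
          (-lam j / lam i) * ((Pᵀ * fderiv ℝ g z.1 v * P) i j) ^ 2 else 0) := by
    rw [Finset.mul_sum]; apply Finset.sum_congr rfl; intro i _
    rw [Finset.mul_sum]; apply Finset.sum_congr rfl; intro j _
    rw [Mmat_smul]
    by_cases h : 0 < lam i ∧ lam j < 0
    · rw [if_pos h, if_pos h]; ring
    · rw [if_neg h, if_neg h, mul_zero]
  rw [hsum]
  ring

theorem memAppl_smul (g : Em m → Mat n) (z : Em m × Mat n)
    (P : Mat n) (lam : Fin n → ℝ) (c : ℝ) (v : Em m)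
    (h : memAppl g z P lam v) : memAppl g z P lam (c • v) := by
  obtain ⟨h1, h2, h3⟩ := h
  refine ⟨fun i j hi hj => ?_, fun i j hi hj => ?_, fun i j hi hj => ?_⟩ <;>
    rw [Mmat_smul]
  · rw [h1 i j hi hj, mul_zero]
  · rw [h2 i j hi hj, mul_zero]
  · rw [h3 i j hi hj, mul_zero]

end Qf
section P3
variable {m n : ℕ}

theorem UnifWSOC_mono {f : Em m → ℝ} {g : Em m → Mat n} {S T : Set (Em m × Mat n)}
    (h : UnifWSOC f g T) (hsub : S ⊆ T) : UnifWSOC f g S := by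
  obtain ⟨c, hc, H⟩ := h
  exact ⟨c, hc, fun z hz => H z (hsub hz)⟩

theorem part3 (f : Em m → ℝ) (g : Em m → Mat n)
    (hf : ContDiff ℝ 2 f) (hg : ContDiff ℝ 2 g)
    (zbar : Em m × Mat n) (hsym : zbar.2.IsSymm)
    (h : ∃ V : Set (Mat n), IsOpen V ∧ zbar.2 ∈ V ∧
        UnifWSOC f g (({zbar.1} : Set (Em m)) ×ˢ V)) :
    SSOSC f g zbar := by
  obtain ⟨V, hV, hyV, c, hc, hW⟩ := h
  intro P lam hdec v hv happ
  obtain ⟨⟨hP1, hP2⟩, hanti, hA⟩ := hdec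
  -- the perturbation direction
  set E : Mat n := Matrix.diagonal (fun i => if lam i = 0 then (1:ℝ) else 0) with hE
  set D : Mat n := P * E * Pᵀ with hD
  -- a positive lower bound for the positive eigenvalues
  obtain ⟨t0, ht0, ht0le⟩ : ∃ t0 > 0, ∀ i, 0 < lam i → t0 ≤ lam i := by
    by_cases hs : (Finset.univ.filter (fun i => 0 < lam i)).Nonempty
    · refine ⟨(Finset.univ.filter (fun i => 0 < lam i)).inf' hs lam, ?_, ?_⟩
      · exact (Finset.lt_inf'_iff hs).mpr (fun i hi => (Finset.mem_filter.mp hi).2)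
      · intro i hi
        exact Finset.inf'_le lam (Finset.mem_filter.mpr ⟨Finset.mem_univ i, hi⟩)
    · refine ⟨1, one_pos, fun i hi => absurd ?_ hs⟩
      exact ⟨i, Finset.mem_filter.mpr ⟨Finset.mem_univ i, hi⟩⟩
  obtain ⟨δ, hδ, hball⟩ := Metric.isOpen_iff.mp hV zbar.2 hyV
  set tmax : ℝ := min t0 (δ / (‖D‖ + 1)) with htmax
  have hDpos : (0:ℝ) < ‖D‖ + 1 := by positivity
  have htmaxpos : 0 < tmax := lt_min ht0 (div_pos hδ hDpos)
  -- the perturbed data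
  set lamt : ℝ → Fin n → ℝ := fun t i => if lam i = 0 then t else lam i with hlamt
  set zt : ℝ → Em m × Mat n := fun t => (zbar.1, zbar.2 + t • D) with hzt
  -- basic sign facts
  have hlamt_app : ∀ t : ℝ, ∀ j, lamt t j = if lam j = 0 then t else lam j := fun t j => rfl
  have hlt_neg : ∀ t : ℝ, 0 < t → ∀ j, (lamt t j < 0 ↔ lam j < 0) := by
    intro t ht j
    rw [hlamt_app]
    by_cases hj : lam j = 0
    · rw [if_pos hj, hj]
      exact ⟨fun hcon => absurd hcon (not_lt.mpr ht.le), fun hcon => absurd hcon (lt_irrefl 0)⟩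
    · rw [if_neg hj]
  -- the constant sum
  set S0 : ℝ := ∑ i : Fin n, ∑ j : Fin n,
      (if 0 < lam i ∧ lam j < 0 then
        (-lam j / lam i) * ((Pᵀ * fderiv ℝ g zbar.1 v * P) i j) ^ 2 else 0) with hS0
  -- Claim: for 0 < t ≤ tmax, c‖v‖² ≤ ⟪v, hessFormula (zt t) v⟫ + 2*S0
  have key : ∀ t : ℝ, 0 < t → t ≤ tmax →
      c * ‖v‖ ^ 2 ≤ ⟪v, hessFormula f g (zt t) v⟫ + 2 * S0 := by
    intro t ht htle
    have htt0 : t ≤ t0 := le_trans htle (min_le_left _ _)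
    -- eigen decomposition of the perturbed point
    have hdiagsum : Matrix.diagonal lam + t • E = Matrix.diagonal (lamt t) := by
      ext i j
      rw [Matrix.add_apply, Matrix.smul_apply, hE]
      by_cases hij : i = j
      · subst hij
        rw [Matrix.diagonal_apply_eq, Matrix.diagonal_apply_eq, Matrix.diagonal_apply_eq,
          hlamt_app]
        by_cases hi : lam i = 0
        · rw [if_pos hi, if_pos hi, hi, smul_eq_mul, mul_one, zero_add]
        · rw [if_neg hi, if_neg hi, smul_eq_mul, mul_zero, add_zero]
      · rw [Matrix.diagonal_apply_ne _ hij, Matrix.diagonal_apply_ne _ hij,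
          Matrix.diagonal_apply_ne _ hij, smul_eq_mul, mul_zero, add_zero]
    have hGzt : Gmap g (zt t) = P * Matrix.diagonal (lamt t) * Pᵀ := by
      show g zbar.1 + (zbar.2 + t • D) = _
      have : g zbar.1 + zbar.2 = P * Matrix.diagonal lam * Pᵀ := hA
      rw [← add_assoc, this, hD]
      rw [← hdiagsum, Matrix.mul_add, Matrix.add_mul, Matrix.mul_smul, Matrix.smul_mul]
    have hanti_t : Antitone (lamt t) := by
      intro i j hij
      have hji := hanti hij
      rw [hlamt_app, hlamt_app]
      by_cases hi : lam i = 0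
      · by_cases hj : lam j = 0
        · rw [if_pos hi, if_pos hj]
        · have hjn : lam j < 0 := lt_of_le_of_ne (hi ▸ hji) hj
          rw [if_pos hi, if_neg hj]
          exact le_of_lt (lt_trans hjn ht)
      · by_cases hj : lam j = 0
        · have hip : 0 < lam i := lt_of_le_of_ne (hj ▸ hji) (Ne.symm hi)
          rw [if_neg hi, if_pos hj]
          exact le_trans htt0 (ht0le i hip)
        · rw [if_neg hi, if_neg hj]
          exact hji
    have hdec_t : IsEigDecomp (Gmap g (zt t)) P (lamt t) := ⟨⟨hP1, hP2⟩, hanti_t, hGzt⟩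
    -- symmetry of the perturbed multiplier
    have hsym_t : (zt t).2.IsSymm := by
      show (zbar.2 + t • D).IsSymm
      rw [Matrix.IsSymm, Matrix.transpose_add, hsym.eq, Matrix.transpose_smul]
      congr 1
      congr 1
      rw [hD, Matrix.transpose_mul, Matrix.transpose_mul, Matrix.transpose_transpose,
        hE, Matrix.diagonal_transpose, Matrix.mul_assoc]
    -- membership in the neighborhood
    have hmem : zt t ∈ (({zbar.1} : Set (Em m)) ×ˢ V) := by
      constructor
      · exact rfl
      · apply hball
        show dist (zbar.2 + t • D) zbar.2 < δ
        rw [dist_eq_norm, add_sub_cancel_left, norm_smul, Real.norm_eq_abs, abs_of_pos ht]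
        calc t * ‖D‖ ≤ (δ / (‖D‖ + 1)) * ‖D‖ := by
              apply mul_le_mul_of_nonneg_right (le_trans htle (min_le_right _ _)) (norm_nonneg D)
          _ < δ := by
              rw [div_mul_eq_mul_div, div_lt_iff₀ hDpos]
              nlinarith [norm_nonneg D]
    -- v is in appl at the perturbed point
    have happl_t : memAppl g (zt t) P (lamt t) v := by
      have hnz : ∀ i : Fin n, lamt t i ≠ 0 := by
        intro i
        rw [hlamt_app]
        by_cases h0 : lam i = 0
        · rw [if_pos h0]; exact ne_of_gt ht
        · rw [if_neg h0]; exact h0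
      refine ⟨fun i j hi _ => absurd hi (hnz i), fun i j hi _ => absurd hi (hnz i),
        fun i j hi hj => ?_⟩
      have hi' : lam i < 0 := (hlt_neg t ht i).mp hi
      have hj' : lam j < 0 := (hlt_neg t ht j).mp hj
      exact happ.2 i j hi' hj'
    -- the uniform bound
    have hQ := hW (zt t) hmem hsym_t P (lamt t) hdec_t v happl_t
    -- identify the sum
    have hsums : Qform f g (zt t) P (lamt t) v = ⟪v, hessFormula f g (zt t) v⟫ + 2 * S0 := by
      rw [Qform_hess f g hf hg]
      congr 2
      rw [hS0]
      apply Finset.sum_congr rfl; intro i _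
      apply Finset.sum_congr rfl; intro j _
      by_cases hi : lam i = 0
      · have hit : lamt t i = t := by rw [hlamt_app, if_pos hi]
        by_cases hj : lam j < 0
        · have hjt : lamt t j < 0 := (hlt_neg t ht j).mpr hj
          rw [if_pos ⟨by rw [hit]; exact ht, hjt⟩, if_neg (by rw [hi]; exact fun hcon => lt_irrefl _ hcon.1)]
          have : (Pᵀ * fderiv ℝ g (zt t).1 v * P) i j = 0 := happ.1 i j hi hj
          rw [this]
          ring
        · rw [if_neg (fun hcon => hj ((hlt_neg t ht j).mp hcon.2)),
            if_neg (fun hcon => hj hcon.2)]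
      · by_cases hip : 0 < lam i
        · have hit : lamt t i = lam i := by rw [hlamt_app, if_neg hi]
          by_cases hj : lam j < 0
          · have hjt : lamt t j = lam j := by rw [hlamt_app, if_neg (ne_of_lt hj)]
            rw [if_pos ⟨by rw [hit]; exact hip, by rw [hjt]; exact hj⟩, if_pos ⟨hip, hj⟩, hit, hjt]
          · rw [if_neg (fun hcon => hj ((hlt_neg t ht j).mp hcon.2)),
              if_neg (fun hcon => hj hcon.2)]
        · have hin : lam i < 0 := lt_of_le_of_ne (not_lt.mp hip) hi
          have hit : lamt t i = lam i := by rw [hlamt_app, if_neg hi]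
          rw [if_neg (fun hcon => hip (hit ▸ hcon.1)), if_neg (fun hcon => hip hcon.1)]
    rw [hsums] at hQ
    exact hQ
  -- pass to the limit t → 0⁺
  have hq_cont : Continuous fun t : ℝ => ⟪v, hessFormula f g (zt t) v⟫ + 2 * S0 := by
    have h1 : Continuous fun t : ℝ => zt t := by
      apply Continuous.prodMk continuous_const
      exact continuous_const.add (continuous_id.smul continuous_const)
    have h2 : Continuous fun t : ℝ => hessFormula f g (zt t) :=
      (continuous_hessFormula f g hf hg).comp h1
    have h3 : Continuous fun t : ℝ => (hessFormula f g (zt t)) v :=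
      isBoundedBilinearMap_apply.continuous.comp (h2.prodMk continuous_const)
    exact (continuous_const.inner h3).add continuous_const
  have hseq : Filter.Tendsto (fun k : ℕ => tmax * ((k : ℝ) + 1)⁻¹) Filter.atTop (nhds 0) := by
    have h1 : Filter.Tendsto (fun k : ℕ => ((k : ℝ) + 1)⁻¹) Filter.atTop (nhds 0) := by
      have := tendsto_one_div_add_atTop_nhds_zero_nat (𝕜 := ℝ)
      simpa [one_div] using this
    have := h1.const_mul tmax
    simpa using this
  have hlim : Filter.Tendsto
      (fun k : ℕ => ⟪v, hessFormula f g (zt (tmax * ((k : ℝ) + 1)⁻¹)) v⟫ + 2 * S0)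
      Filter.atTop (nhds (⟪v, hessFormula f g (zt 0) v⟫ + 2 * S0)) :=
    (hq_cont.continuousAt.tendsto).comp hseq
  have hge : c * ‖v‖ ^ 2 ≤ ⟪v, hessFormula f g (zt 0) v⟫ + 2 * S0 := by
    refine ge_of_tendsto hlim (Filter.Eventually.of_forall fun k => ?_)
    apply key
    · have : (0:ℝ) < ((k : ℝ) + 1)⁻¹ := by positivity
      exact mul_pos htmaxpos this
    · have h1 : ((k : ℝ) + 1)⁻¹ ≤ 1 := by
        rw [inv_le_one_iff₀]
        right
        nlinarith [Nat.cast_nonneg (α := ℝ) k]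
      exact mul_le_of_le_one_right htmaxpos.le h1
  have hzt0 : zt 0 = zbar := by
    rw [hzt]
    simp
  have hQbar : Qform f g zbar P lam v = ⟪v, hessFormula f g (zt 0) v⟫ + 2 * S0 := by
    rw [hzt0, Qform_hess f g hf hg, hS0]
  rw [hQbar]
  have hnv : 0 < ‖v‖ := norm_pos_iff.mpr hv
  exact lt_of_lt_of_le (mul_pos hc (pow_pos hnv 2)) hge

end P3
section Helpers
variable {m n : ℕ}

theorem entry_mul_tendsto {A B : ℕ → Mat n} {A0 B0 : Mat n}
    (hA : ∀ i j, Filter.Tendsto (fun k => A k i j) Filter.atTop (nhds (A0 i j)))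
    (hB : ∀ i j, Filter.Tendsto (fun k => B k i j) Filter.atTop (nhds (B0 i j))) :
    ∀ i j, Filter.Tendsto (fun k => (A k * B k) i j) Filter.atTop (nhds ((A0 * B0) i j)) := by
  intro i j
  simp only [Matrix.mul_apply]
  exact tendsto_finset_sum _ (fun l _ => (hA i l).mul (hB l j))

theorem entry_transpose_tendsto {A : ℕ → Mat n} {A0 : Mat n}
    (hA : ∀ i j, Filter.Tendsto (fun k => A k i j) Filter.atTop (nhds (A0 i j))) :
    ∀ i j, Filter.Tendsto (fun k => (A k)ᵀ i j) Filter.atTop (nhds (A0ᵀ i j)) := by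
  intro i j
  simpa only [Matrix.transpose_apply] using hA j i

end Helpers
section Helpers2
variable {m n : ℕ}

theorem ite_term_nonneg (lam' : Fin n → ℝ) (Mv : Mat n) (i j : Fin n) :
    0 ≤ (if 0 < lam' i ∧ lam' j < 0 then (-lam' j / lam' i) * (Mv i j)^2 else 0) := by
  by_cases h : 0 < lam' i ∧ lam' j < 0
  · rw [if_pos h]
    apply mul_nonneg (div_nonneg (by linarith [h.2]) h.1.le) (sq_nonneg _)
  · rw [if_neg h]

theorem term_le_double_sum (lam' : Fin n → ℝ) (Mv : Mat n) (i j : Fin n) :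
    (if 0 < lam' i ∧ lam' j < 0 then (-lam' j / lam' i) * (Mv i j)^2 else 0)
      ≤ ∑ i', ∑ j',
        (if 0 < lam' i' ∧ lam' j' < 0 then (-lam' j' / lam' i') * (Mv i' j')^2 else 0) := by
  calc (if 0 < lam' i ∧ lam' j < 0 then (-lam' j / lam' i) * (Mv i j)^2 else 0)
      ≤ ∑ j', (if 0 < lam' i ∧ lam' j' < 0 then (-lam' j' / lam' i) * (Mv i j')^2 else 0) :=
        Finset.single_le_sum (fun j' _ => ite_term_nonneg lam' Mv i j') (Finset.mem_univ j)
    _ ≤ ∑ i', ∑ j',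
        (if 0 < lam' i' ∧ lam' j' < 0 then (-lam' j' / lam' i') * (Mv i' j')^2 else 0) :=
        Finset.single_le_sum
          (fun i' _ => Finset.sum_nonneg (fun j' _ => ite_term_nonneg lam' Mv i' j'))
          (Finset.mem_univ i)

end Helpers2
section P1
variable {m n : ℕ}

set_option maxHeartbeats 2000000 in
theorem part1 (f : Em m → ℝ) (g : Em m → Mat n)
    (hf : ContDiff ℝ 2 f) (hg : ContDiff ℝ 2 g)
    (zbar : Em m × Mat n) (hS : SSOSC f g zbar) :
    ∃ U : Set (Em m × Mat n), IsOpen U ∧ zbar ∈ U ∧ UnifWSOC f g U := by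
  by_contra hcon
  push_neg at hcon
  -- extract failing sequences
  have hfail : ∀ k : ℕ, ∃ z : Em m × Mat n, dist z zbar < ((k:ℝ)+1)⁻¹ ∧ z.2.IsSymm ∧
      ∃ P lam, IsEigDecomp (Gmap g z) P lam ∧
      ∃ v, memAppl g z P lam v ∧ Qform f g z P lam v < ((k:ℝ)+1)⁻¹ * ‖v‖^2 := by
    intro k
    by_contra hk
    push_neg at hk
    have := hcon (Metric.ball zbar ((k:ℝ)+1)⁻¹) Metric.isOpen_ball
      (Metric.mem_ball_self (by positivity))
    exact this ⟨((k:ℝ)+1)⁻¹, by positivity,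
      fun z hz hzs P lam hd v hv => hk z (Metric.mem_ball.mp hz) hzs P lam hd v hv⟩
  choose z hzb hzs P lam hdec v happl hQ using hfail
  -- the chosen v's are nonzero; normalize them
  have hvne : ∀ k, v k ≠ 0 := by
    intro k hv0
    have := hQ k
    rw [hv0, Qform_zero, norm_zero] at this
    norm_num at this
  set w : ℕ → Em m := fun k => ‖v k‖⁻¹ • v k with hw
  have hwnorm : ∀ k, ‖w k‖ = 1 := by
    intro k
    rw [hw, norm_smul, norm_inv, norm_norm, inv_mul_cancel₀ (norm_ne_zero_iff.mpr (hvne k))]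
  have happlw : ∀ k, memAppl g (z k) (P k) (lam k) (w k) :=
    fun k => memAppl_smul g (z k) (P k) (lam k) _ (v k) (happl k)
  have hQw : ∀ k, Qform f g (z k) (P k) (lam k) (w k) < ((k:ℝ)+1)⁻¹ := by
    intro k
    rw [hw, Qform_smul]
    have hn : (0:ℝ) < ‖v k‖ := norm_pos_iff.mpr (hvne k)
    have h2 : (‖v k‖⁻¹)^2 * Qform f g (z k) (P k) (lam k) (v k)
        < (‖v k‖⁻¹)^2 * (((k:ℝ)+1)⁻¹ * ‖v k‖^2) :=
      mul_lt_mul_of_pos_left (hQ k) (by positivity)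
    calc (‖v k‖⁻¹)^2 * Qform f g (z k) (P k) (lam k) (v k)
        < (‖v k‖⁻¹)^2 * (((k:ℝ)+1)⁻¹ * ‖v k‖^2) := h2
      _ = ((k:ℝ)+1)⁻¹ := by field_simp
  -- z converges to zbar
  have hzconv : Filter.Tendsto z Filter.atTop (nhds zbar) := by
    refine tendsto_iff_dist_tendsto_zero.mpr ?_
    apply squeeze_zero (fun k => dist_nonneg) (fun k => (hzb k).le)
    have := tendsto_one_div_add_atTop_nhds_zero_nat (𝕜 := ℝ)
    simpa [one_div] using this
  -- the matrices Gmap g (z k) converge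
  have hGconv : Filter.Tendsto (fun k => Gmap g (z k)) Filter.atTop (nhds (Gmap g zbar)) := by
    have hcont : Continuous fun zz : Em m × Mat n => Gmap g zz :=
      ((hg.continuous).comp continuous_fst).add continuous_snd
    exact (hcont.continuousAt.tendsto).comp hzconv
  -- uniform bound on eigenvalues
  obtain ⟨BG, hBG⟩ : ∃ BG : ℝ, ∀ k, ‖Gmap g (z k)‖ ≤ BG := by
    have hb := (hGconv.norm).bddAbove_range
    obtain ⟨BG, hBG⟩ := hb
    exact ⟨BG, fun k => hBG (Set.mem_range_self k)⟩
  -- compactness: extract convergent subsequence of (P k, lam k, w k)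
  set seq : ℕ → Mat n × ((Fin n → ℝ) × Em m) := fun k => (P k, lam k, w k) with hseqdef
  set R : ℝ := max (Real.sqrt n) (max (max BG 0) 1) with hR
  have hmem : ∀ k, seq k ∈ Metric.closedBall (0 : Mat n × ((Fin n → ℝ) × Em m)) R := by
    intro k
    rw [Metric.mem_closedBall, dist_zero_right]
    rw [Prod.norm_def, Prod.norm_def]
    apply max_le
    · exact le_trans (ortho_norm (hdec k).1) (le_max_left _ _)
    · apply max_le
      · have : ‖lam k‖ ≤ max BG 0 := by
          apply pi_norm_le_iff_of_nonneg (le_max_right _ _) |>.mpr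
          intro i
          rw [Real.norm_eq_abs]
          exact le_trans (eig_abs_le (hdec k) i) (le_trans (hBG k) (le_max_left _ _))
        exact le_trans this (le_trans (le_max_left _ _) (le_max_right _ _))
      · rw [hwnorm k]
        exact le_trans (le_max_right _ _) (le_max_right _ _)
  obtain ⟨L, _, φ, hφ, hLconv⟩ :=
    (isCompact_closedBall (0 : Mat n × ((Fin n → ℝ) × Em m)) R).tendsto_subseq hmem
  obtain ⟨Pl, laml, wl⟩ := L
  -- component limits
  have hPconv : Filter.Tendsto (fun a => P (φ a)) Filter.atTop (nhds Pl) :=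
    (continuous_fst.tendsto _).comp hLconv
  have hlamconv : Filter.Tendsto (fun a => lam (φ a)) Filter.atTop (nhds laml) :=
    ((continuous_fst.comp continuous_snd).tendsto _).comp hLconv
  have hwconv : Filter.Tendsto (fun a => w (φ a)) Filter.atTop (nhds wl) :=
    ((continuous_snd.comp continuous_snd).tendsto _).comp hLconv
  have hlami : ∀ i, Filter.Tendsto (fun a => lam (φ a) i) Filter.atTop (nhds (laml i)) :=
    fun i => ((continuous_apply i).tendsto _).comp hlamconv
  have hPe : ∀ i j, Filter.Tendsto (fun a => P (φ a) i j) Filter.atTop (nhds (Pl i j)) :=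
    fun i j => entry_tendsto hPconv i j
  have hzφ : Filter.Tendsto (fun a => z (φ a)) Filter.atTop (nhds zbar) :=
    hzconv.comp hφ.tendsto_atTop
  have hGφ : Filter.Tendsto (fun a => Gmap g (z (φ a))) Filter.atTop (nhds (Gmap g zbar)) :=
    hGconv.comp hφ.tendsto_atTop
  -- the limit eigen decomposition
  have hwlnorm : ‖wl‖ = 1 := by
    have h1 : Filter.Tendsto (fun a => ‖w (φ a)‖) Filter.atTop (nhds ‖wl‖) := hwconv.norm
    have h2 : Filter.Tendsto (fun a => ‖w (φ a)‖) Filter.atTop (nhds 1) := by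
      simp only [hwnorm]
      exact tendsto_const_nhds
    exact tendsto_nhds_unique h1 h2
  have hwlne : wl ≠ 0 := by
    intro h0
    rw [h0, norm_zero] at hwlnorm
    norm_num at hwlnorm
  have hdiage : ∀ i j, Filter.Tendsto (fun a => Matrix.diagonal (lam (φ a)) i j)
      Filter.atTop (nhds (Matrix.diagonal laml i j)) := by
    intro i j
    by_cases hij : i = j
    · subst hij
      simpa only [Matrix.diagonal_apply_eq] using hlami i
    · simp only [Matrix.diagonal_apply_ne _ hij]
      exact tendsto_const_nhds
  have hPte : ∀ i j, Filter.Tendsto (fun a => (P (φ a))ᵀ i j) Filter.atTop (nhds (Plᵀ i j)) :=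
    entry_transpose_tendsto hPe
  have hortho : IsOrthoMat Pl := by
    constructor
    · ext i j
      refine tendsto_nhds_unique (entry_mul_tendsto hPe hPte i j) ?_
      have hconst : ∀ a : ℕ, (P (φ a) * (P (φ a))ᵀ) i j = (1 : Mat n) i j := by
        intro a
        rw [((hdec (φ a)).1).1]
      simp only [hconst]
      exact tendsto_const_nhds
    · ext i j
      refine tendsto_nhds_unique (entry_mul_tendsto hPte hPe i j) ?_
      have hconst : ∀ a : ℕ, ((P (φ a))ᵀ * P (φ a)) i j = (1 : Mat n) i j := by
        intro a
        rw [((hdec (φ a)).1).2]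
      simp only [hconst]
      exact tendsto_const_nhds
  have hantil : Antitone laml := by
    intro i j hij
    exact le_of_tendsto_of_tendsto' (hlami j) (hlami i) (fun a => (hdec (φ a)).2.1 hij)
  have hdecl : IsEigDecomp (Gmap g zbar) Pl laml := by
    refine ⟨hortho, hantil, ?_⟩
    ext i j
    refine tendsto_nhds_unique (entry_tendsto hGφ i j) ?_
    have h1 : ∀ a : ℕ, Gmap g (z (φ a)) i j
        = (P (φ a) * Matrix.diagonal (lam (φ a)) * (P (φ a))ᵀ) i j := by
      intro a
      rw [(hdec (φ a)).2.2]
    simp only [h1]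
    exact entry_mul_tendsto (entry_mul_tendsto hPe hdiage) hPte i j
  -- convergence of the transformed derivative matrices
  set M : ℕ → Mat n := fun a => (P (φ a))ᵀ * fderiv ℝ g (z (φ a)).1 (w (φ a)) * P (φ a) with hM
  set Ml : Mat n := Plᵀ * fderiv ℝ g zbar.1 wl * Pl with hMl
  have hDgconv : Filter.Tendsto (fun a => fderiv ℝ g (z (φ a)).1 (w (φ a)))
      Filter.atTop (nhds (fderiv ℝ g zbar.1 wl)) := by
    have hcont : Continuous fun p : Em m × Em m => fderiv ℝ g p.1 p.2 :=
      isBoundedBilinearMap_apply.continuous.comp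
        (((hg.continuous_fderiv two_ne_zero).comp continuous_fst).prodMk continuous_snd)
    have hpair : Filter.Tendsto (fun a => ((z (φ a)).1, w (φ a))) Filter.atTop
        (nhds (zbar.1, wl)) :=
      ((continuous_fst.tendsto _).comp hzφ).prodMk_nhds hwconv
    exact (hcont.continuousAt.tendsto).comp hpair
  have hMe : ∀ i j, Filter.Tendsto (fun a => M a i j) Filter.atTop (nhds (Ml i j)) :=
    entry_mul_tendsto (entry_mul_tendsto hPte (entry_tendsto hDgconv)) hPe
  -- convergence of the Hessian term
  have hhconv : Filter.Tendsto
      (fun a => (⟪w (φ a), hessFormula f g (z (φ a)) (w (φ a))⟫ : ℝ))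
      Filter.atTop (nhds (⟪wl, hessFormula f g zbar wl⟫ : ℝ)) := by
    have hcont : Continuous fun p : (Em m × Mat n) × Em m =>
        (⟪p.2, hessFormula f g p.1 p.2⟫ : ℝ) := by
      apply Continuous.inner continuous_snd
      exact isBoundedBilinearMap_apply.continuous.comp
        (((continuous_hessFormula f g hf hg).comp continuous_fst).prodMk continuous_snd)
    have h := (hcont.tendsto (zbar, wl)).comp (hzφ.prodMk_nhds hwconv)
    exact h
  -- bound on Q along the subsequence
  have hQφ : ∀ a : ℕ, Qform f g (z (φ a)) (P (φ a)) (lam (φ a)) (w (φ a)) < ((a:ℝ)+1)⁻¹ := by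
    intro a
    refine lt_of_lt_of_le (hQw (φ a)) ?_
    apply inv_anti₀ (by positivity)
    have h1 : a ≤ φ a := hφ.le_apply
    have h2 : (a:ℝ) ≤ (φ a : ℝ) := Nat.cast_le.mpr h1
    linarith
  -- expansion of Q along the subsequence
  have hQexp : ∀ a : ℕ, Qform f g (z (φ a)) (P (φ a)) (lam (φ a)) (w (φ a))
      = ⟪w (φ a), hessFormula f g (z (φ a)) (w (φ a))⟫ +
        2 * ∑ i : Fin n, ∑ j : Fin n,
          (if 0 < lam (φ a) i ∧ lam (φ a) j < 0 then
            (-(lam (φ a) j) / lam (φ a) i) * (M a i j) ^ 2 else 0) := by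
    intro a
    rw [Qform_hess f g hf hg, hM]
  -- v in app at the limit
  have hbg : ∀ i j, laml i = 0 → laml j < 0 → Ml i j = 0 := by
    intro i j hi0 hj0
    have hevj : ∀ᶠ a in Filter.atTop, lam (φ a) j < 0 :=
      (hlami j).eventually_lt_const hj0
    -- eventual bound on (M a i j)^2
    have hbound : ∀ᶠ a in Filter.atTop, (M a i j) ^ 2 ≤
        max (lam (φ a) i) 0 * ((((a:ℝ)+1)⁻¹ -
          ⟪w (φ a), hessFormula f g (z (φ a)) (w (φ a))⟫) / (2 * (-(lam (φ a) j)))) := by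
      filter_upwards [hevj] with a haj
      by_cases hpos : 0 < lam (φ a) i
      · have h1 : (-(lam (φ a) j) / lam (φ a) i) * (M a i j) ^ 2 ≤
            ∑ i' : Fin n, ∑ j' : Fin n,
              (if 0 < lam (φ a) i' ∧ lam (φ a) j' < 0 then
                (-(lam (φ a) j') / lam (φ a) i') * (M a i' j') ^ 2 else 0) := by
          have := term_le_double_sum (lam (φ a)) (M a) i j
          rw [if_pos ⟨hpos, haj⟩] at this
          exact this
        have h2 : ∑ i' : Fin n, ∑ j' : Fin n,
              (if 0 < lam (φ a) i' ∧ lam (φ a) j' < 0 then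
                (-(lam (φ a) j') / lam (φ a) i') * (M a i' j') ^ 2 else 0)
            ≤ (((a:ℝ)+1)⁻¹ - ⟪w (φ a), hessFormula f g (z (φ a)) (w (φ a))⟫) / 2 := by
          have hq := (hQφ a).le
          rw [hQexp a] at hq
          linarith
        have hjpos : 0 < -(lam (φ a) j) := by linarith
        rw [max_eq_left hpos.le]
        have key : (-(lam (φ a) j)) * (M a i j) ^ 2 ≤
            lam (φ a) i * ((((a:ℝ)+1)⁻¹ -
              ⟪w (φ a), hessFormula f g (z (φ a)) (w (φ a))⟫) / 2) := by
          have h3 := le_trans h1 h2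
          calc (-(lam (φ a) j)) * (M a i j) ^ 2
              = lam (φ a) i * ((-(lam (φ a) j) / lam (φ a) i) * (M a i j) ^ 2) := by
                field_simp
            _ ≤ lam (φ a) i * ((((a:ℝ)+1)⁻¹ -
                ⟪w (φ a), hessFormula f g (z (φ a)) (w (φ a))⟫) / 2) :=
                mul_le_mul_of_nonneg_left h3 hpos.le
        have h4 : lam (φ a) i * ((((a:ℝ)+1)⁻¹ -
              ⟪w (φ a), hessFormula f g (z (φ a)) (w (φ a))⟫) / (2 * (-(lam (φ a) j))))
            = (lam (φ a) i * ((((a:ℝ)+1)⁻¹ -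
              ⟪w (φ a), hessFormula f g (z (φ a)) (w (φ a))⟫) / 2)) / (-(lam (φ a) j)) := by
          field_simp
        rw [h4, le_div_iff₀ hjpos]
        calc (M a i j) ^ 2 * (-(lam (φ a) j)) = (-(lam (φ a) j)) * (M a i j) ^ 2 := by ring
          _ ≤ _ := key
      · have hM0 : M a i j = 0 := by
          rcases lt_or_eq_of_le (not_lt.mp hpos) with hlt | heq
          · exact (happlw (φ a)).2.2 i j hlt haj
          · exact (happlw (φ a)).2.1 i j heq haj
        rw [hM0, max_eq_right (not_lt.mp hpos)]
        simp
    -- the bound tends to zero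
    have hivp : Filter.Tendsto (fun a : ℕ => ((a:ℝ)+1)⁻¹) Filter.atTop (nhds 0) := by
      have := tendsto_one_div_add_atTop_nhds_zero_nat (𝕜 := ℝ)
      simpa [one_div] using this
    have hbnd_tendsto : Filter.Tendsto (fun a =>
        max (lam (φ a) i) 0 * ((((a:ℝ)+1)⁻¹ -
          ⟪w (φ a), hessFormula f g (z (φ a)) (w (φ a))⟫) / (2 * (-(lam (φ a) j)))))
        Filter.atTop (nhds (max (laml i) 0 * ((0 -
          ⟪wl, hessFormula f g zbar wl⟫) / (2 * (-(laml j)))))) := by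
      apply Filter.Tendsto.mul
      · exact (hlami i).max tendsto_const_nhds
      · apply Filter.Tendsto.div (hivp.sub hhconv)
          ((tendsto_const_nhds.mul (hlami j).neg))
        intro hc
        have : -(laml j) > 0 := by linarith
        nlinarith [hc]
    have hlim0 : Filter.Tendsto (fun a => (M a i j) ^ 2) Filter.atTop (nhds 0) := by
      apply squeeze_zero' (Filter.Eventually.of_forall (fun a => sq_nonneg (M a i j))) hbound
      have hbt := hbnd_tendsto
      rw [hi0, max_self, zero_mul] at hbt
      exact hbt
    have h1 : Filter.Tendsto (fun a => (M a i j) ^ 2) Filter.atTop (nhds ((Ml i j) ^ 2)) :=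
      (hMe i j).pow 2
    have h0 : Ml i j ^ 2 = 0 := tendsto_nhds_unique h1 hlim0
    exact pow_eq_zero_iff (by norm_num : (2:ℕ) ≠ 0) |>.mp h0
  have hgg : ∀ i j, laml i < 0 → laml j < 0 → Ml i j = 0 := by
    intro i j hi0 hj0
    have hev : ∀ᶠ a in Filter.atTop, M a i j = 0 := by
      filter_upwards [(hlami i).eventually_lt_const hi0, (hlami j).eventually_lt_const hj0]
        with a hia hja
      exact (happlw (φ a)).2.2 i j hia hja
    refine tendsto_nhds_unique (hMe i j) (Filter.Tendsto.congr' ?_ tendsto_const_nhds)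
    filter_upwards [hev] with a ha
    exact ha.symm
  -- the limiting Q value is nonpositive
  set T : Finset (Fin n × Fin n) :=
    Finset.univ.filter (fun p : Fin n × Fin n => 0 < laml p.1 ∧ laml p.2 < 0) with hT
  set Slim : ℝ := ∑ p ∈ T, (-(laml p.2) / laml p.1) * (Ml p.1 p.2) ^ 2 with hSlim
  have hLle : ∀ a : ℕ, ⟪w (φ a), hessFormula f g (z (φ a)) (w (φ a))⟫ +
      2 * ∑ p ∈ T, (if 0 < lam (φ a) p.1 ∧ lam (φ a) p.2 < 0 then
        (-(lam (φ a) p.2) / lam (φ a) p.1) * (M a p.1 p.2) ^ 2 else 0) ≤ ((a:ℝ)+1)⁻¹ := by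
    intro a
    have h1 : ∑ p ∈ T, (if 0 < lam (φ a) p.1 ∧ lam (φ a) p.2 < 0 then
        (-(lam (φ a) p.2) / lam (φ a) p.1) * (M a p.1 p.2) ^ 2 else 0)
        ≤ ∑ i : Fin n, ∑ j : Fin n,
          (if 0 < lam (φ a) i ∧ lam (φ a) j < 0 then
            (-(lam (φ a) j) / lam (φ a) i) * (M a i j) ^ 2 else 0) := by
      rw [← Finset.sum_product']
      apply Finset.sum_le_sum_of_subset_of_nonneg (Finset.filter_subset _ _)
      intro p _ _
      exact ite_term_nonneg (lam (φ a)) (M a) p.1 p.2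
    have hq := (hQφ a).le
    rw [hQexp a] at hq
    linarith
  have hLtendsto : Filter.Tendsto (fun a => ⟪w (φ a), hessFormula f g (z (φ a)) (w (φ a))⟫ +
      2 * ∑ p ∈ T, (if 0 < lam (φ a) p.1 ∧ lam (φ a) p.2 < 0 then
        (-(lam (φ a) p.2) / lam (φ a) p.1) * (M a p.1 p.2) ^ 2 else 0))
      Filter.atTop (nhds (⟪wl, hessFormula f g zbar wl⟫ + 2 * Slim)) := by
    apply hhconv.add
    apply Filter.Tendsto.const_mul
    rw [hSlim]
    apply tendsto_finset_sum
    intro p hp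
    have hpT := Finset.mem_filter.mp hp
    have hev : ∀ᶠ a in Filter.atTop,
        (if 0 < lam (φ a) p.1 ∧ lam (φ a) p.2 < 0 then
          (-(lam (φ a) p.2) / lam (φ a) p.1) * (M a p.1 p.2) ^ 2 else 0)
        = (-(lam (φ a) p.2) / lam (φ a) p.1) * (M a p.1 p.2) ^ 2 := by
      filter_upwards [(hlami p.1).eventually_const_lt hpT.2.1,
        (hlami p.2).eventually_lt_const hpT.2.2] with a h1 h2
      rw [if_pos ⟨h1, h2⟩]
    refine Filter.Tendsto.congr' (hev.mono fun a ha => ha.symm) ?_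
    exact (((hlami p.2).neg.div (hlami p.1) (ne_of_gt hpT.2.1)).mul ((hMe p.1 p.2).pow 2))
  have hivp : Filter.Tendsto (fun a : ℕ => ((a:ℝ)+1)⁻¹) Filter.atTop (nhds 0) := by
    have := tendsto_one_div_add_atTop_nhds_zero_nat (𝕜 := ℝ)
    simpa [one_div] using this
  have hfinal : ⟪wl, hessFormula f g zbar wl⟫ + 2 * Slim ≤ 0 :=
    le_of_tendsto_of_tendsto' hLtendsto hivp hLle
  -- identify the limit Q value
  have hQl : Qform f g zbar Pl laml wl = ⟪wl, hessFormula f g zbar wl⟫ + 2 * Slim := by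
    rw [Qform_hess f g hf hg]
    congr 1
    congr 1
    rw [hSlim, ← Finset.sum_product']
    rw [hT, Finset.sum_filter]
    apply Finset.sum_congr rfl
    intro p _
    rw [hMl]
  -- contradiction with S-SOSC
  have hpos := hS Pl laml hdecl wl hwlne ⟨hbg, hgg⟩
  rw [hQl] at hpos
  linarith

end P1

/-- (a) S-SOSC at `z̄` implies (b) the uniform W-SOC on a neighborhood of
`z̄`; (b) implies (c) the uniform W-SOC on `{x̄} × V` for a neighborhood `V` of `ȳ`;
and if the SONC holds at `z̄`, then (a), (b), (c) are equivalent. -/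
theorem SSOSC_iff_uniform_WSOC {m n : ℕ}
    (f : Em m → ℝ) (g : Em m → Mat n)
    (hf : ContDiff ℝ 2 f) (hg : ContDiff ℝ 2 g) (hgs : ∀ x, (g x).IsSymm)
    (zbar : Em m × Mat n) (hsym : zbar.2.IsSymm) :
    (SSOSC f g zbar →
      ∃ U : Set (Em m × Mat n), IsOpen U ∧ zbar ∈ U ∧ UnifWSOC f g U) ∧
    ((∃ U : Set (Em m × Mat n), IsOpen U ∧ zbar ∈ U ∧ UnifWSOC f g U) →
      ∃ V : Set (Mat n), IsOpen V ∧ zbar.2 ∈ V ∧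
        UnifWSOC f g (({zbar.1} : Set (Em m)) ×ˢ V)) ∧
    (SONC f g zbar →
      ((∃ V : Set (Mat n), IsOpen V ∧ zbar.2 ∈ V ∧
          UnifWSOC f g (({zbar.1} : Set (Em m)) ×ˢ V)) →
        SSOSC f g zbar)) := by
  refine ⟨fun hS => part1 f g hf hg zbar hS, ?_, fun _ hV => part3 f g hf hg zbar hsym hV⟩
  rintro ⟨U, hU, hzU, hW⟩
  refine ⟨{y | (zbar.1, y) ∈ U}, hU.preimage (Continuous.prodMk_right zbar.1), ?_, UnifWSOC_mono hW ?_⟩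
  · show (zbar.1, zbar.2) ∈ U
    rwa [Prod.mk.eta]
  · intro zz hzz
    obtain ⟨h1, h2⟩ := hzz
    have h1' : zz.1 = zbar.1 := h1
    have h3 : (zbar.1, zz.2) ∈ U := h2
    rwa [← h1', Prod.mk.eta] at h3
end

section
/- Let U ⊆ ℝ^m × S^n be open and let p,q ≥ 0 with p+q ≤ n. If the W-SOC holds uniformly on U ∩ M̃_{p,q}, then for every integer p' with 0 ≤ p' ≤ p the W-SOC holds at every z ∈ U ∩ M̃_{p',q}. -/
open scoped Classical RealInnerProductSpace
open Matrix Set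

noncomputable section
open Polynomial in
lemma help1 {n : ℕ} (S : Finset (Fin n)) (hS : ∀ i j : Fin n, i ≤ j → j ∈ S → i ∈ S)
    (i : Fin n) : i ∈ S ↔ i.val < S.card := by
  constructor
  · intro hi
    have hsub : Finset.Iic i ⊆ S := fun j hj => hS j i (Finset.mem_Iic.mp hj) hi
    have := Finset.card_le_card hsub
    rw [Fin.card_Iic] at this
    omega
  · intro hi
    by_contra hmem
    have hsub : S ⊆ Finset.Iio i := by
      intro j hj
      rw [Finset.mem_Iio]
      rcases lt_or_ge j i with h | h
      · exact h
      · exact absurd (hS i j h hj) hmem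
    have := Finset.card_le_card hsub
    rw [Fin.card_Iio] at this
    omega

lemma ncard_setOf_eq_card_filter {n : ℕ} (P : Fin n → Prop) [DecidablePred P] :
    {i : Fin n | P i}.ncard = (Finset.univ.filter P).card := by
  rw [Set.ncard_eq_toFinset_card']
  congr 1
  ext i
  simp

lemma antitone_pos_iff {n p' : ℕ} {lam : Fin n → ℝ} (hA : Antitone lam)
    (hp : {i : Fin n | 0 < lam i}.ncard = p') : ∀ i : Fin n, 0 < lam i ↔ i.val < p' := by
  classical
  intro i
  have hd : ∀ i j : Fin n, i ≤ j → j ∈ Finset.univ.filter (fun k => 0 < lam k) →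
      i ∈ Finset.univ.filter (fun k => 0 < lam k) := by
    intro i j hij hj
    simp only [Finset.mem_filter, Finset.mem_univ, true_and] at *
    exact lt_of_lt_of_le hj (hA hij)
  have := help1 _ hd i
  rw [ncard_setOf_eq_card_filter] at hp
  simp only [Finset.mem_filter, Finset.mem_univ, true_and] at this
  rw [this, hp]

lemma antitone_nonneg_iff {n q : ℕ} {lam : Fin n → ℝ} (hA : Antitone lam)
    (hq : {i : Fin n | lam i < 0}.ncard = q) : ∀ i : Fin n, 0 ≤ lam i ↔ i.val < n - q := by
  classical
  intro i
  have hd : ∀ i j : Fin n, i ≤ j → j ∈ Finset.univ.filter (fun k => 0 ≤ lam k) →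
      i ∈ Finset.univ.filter (fun k => 0 ≤ lam k) := by
    intro i j hij hj
    simp only [Finset.mem_filter, Finset.mem_univ, true_and] at *
    exact le_trans hj (hA hij)
  have h2 := help1 _ hd i
  rw [ncard_setOf_eq_card_filter] at hq
  have hcard : (Finset.univ.filter (fun k => 0 ≤ lam k)).card = n - q := by
    have hsplit := Finset.card_filter_add_card_filter_not
      (s := (Finset.univ : Finset (Fin n))) (p := fun k => 0 ≤ lam k)
    have : (Finset.univ.filter (fun k => ¬ 0 ≤ lam k)).card = q := by
      rw [← hq]; congr 1; ext k; simp [not_le]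
    simp only [Finset.card_univ, Fintype.card_fin] at hsplit
    omega
  simp only [Finset.mem_filter, Finset.mem_univ, true_and] at h2
  rw [h2, hcard]
end
noncomputable section
lemma ncard_val_lt {n p : ℕ} (hpn : p ≤ n) : {i : Fin n | i.val < p}.ncard = p := by
  classical
  rw [ncard_setOf_eq_card_filter]
  have : (Finset.univ.filter (fun i : Fin n => i.val < p)).card = (Finset.range p).card := by
    apply Finset.card_bij (fun (i : Fin n) _ => i.val)
    · intro a ha
      simp only [Finset.mem_filter, Finset.mem_univ, true_and] at ha
      exact Finset.mem_range.mpr ha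
    · intro a _ b _ hab
      exact Fin.val_injective hab
    · intro b hb
      rw [Finset.mem_range] at hb
      exact ⟨⟨b, lt_of_lt_of_le hb hpn⟩, by simp [hb], rfl⟩
  rw [this, Finset.card_range]
end
noncomputable section
open Polynomial in
lemma eig_lam_unique {n : ℕ} {A P₁ P₂ : Mat n} {l₁ l₂ : Fin n → ℝ}
    (h₁ : IsEigDecomp A P₁ l₁) (h₂ : IsEigDecomp A P₂ l₂) : l₁ = l₂ := by
  classical
  obtain ⟨⟨hP₁, hP₁'⟩, hA₁, hrep₁⟩ := h₁
  obtain ⟨⟨hP₂, hP₂'⟩, hA₂, hrep₂⟩ := h₂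
  -- det of (A - t•1) equals prod (l i - t) for each decomposition
  have hdet : ∀ (P : Mat n) (l : Fin n → ℝ), P * Pᵀ = 1 → A = P * Matrix.diagonal l * Pᵀ →
      ∀ t : ℝ, (A - t • 1).det = ∏ i, (l i - t) := by
    intro P l hP hrep t
    have h1 : A - t • (1 : Mat n) = P * (Matrix.diagonal (fun i => l i - t)) * Pᵀ := by
      have : Matrix.diagonal (fun i => l i - t) =
          Matrix.diagonal l - t • (1 : Mat n) := by
        rw [Matrix.smul_one_eq_diagonal, ← Matrix.diagonal_sub]
      rw [this, Matrix.mul_sub, Matrix.sub_mul, ← hrep]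
      congr 1
      rw [Matrix.mul_smul, Matrix.mul_one, Matrix.smul_mul, hP]
    rw [h1, Matrix.det_mul, Matrix.det_mul, Matrix.det_diagonal]
    have hdP : P.det * P.det = 1 := by
      have := congrArg Matrix.det hP
      rwa [Matrix.det_mul, Matrix.det_transpose, Matrix.det_one] at this
    rw [Matrix.det_transpose]
    linear_combination (∏ i : Fin n, (l i - t)) * hdP
  have key : ∀ t : ℝ, ∏ i, (l₁ i - t) = ∏ i, (l₂ i - t) := by
    intro t
    rw [← hdet P₁ l₁ hP₁ hrep₁ t, ← hdet P₂ l₂ hP₂ hrep₂ t]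
  -- polynomial equality
  have hpoly : (∏ i : Fin n, (X - C (l₁ i))) = ∏ i : Fin n, (X - C (l₂ i)) := by
    apply Polynomial.funext
    intro t
    simp only [eval_prod, eval_sub, eval_X, eval_C]
    have e1 : ∀ (l : Fin n → ℝ), ∏ i : Fin n, (t - l i) = (-1)^n * ∏ i, (l i - t) := by
      intro l
      have hpt : ∀ i : Fin n, t - l i = (-1 : ℝ) * (l i - t) := fun i => by ring
      calc ∏ i : Fin n, (t - l i) = ∏ i : Fin n, ((-1 : ℝ) * (l i - t)) := by
            exact Finset.prod_congr rfl (fun i _ => hpt i)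
        _ = (-1 : ℝ)^n * ∏ i, (l i - t) := by
            rw [Finset.prod_mul_distrib, Finset.prod_const, Finset.card_univ, Fintype.card_fin]
    rw [e1 l₁, e1 l₂, key t]
  -- multiset equality via roots
  have hms : Multiset.map l₁ Finset.univ.val = Multiset.map l₂ Finset.univ.val := by
    have r1 : ∀ (l : Fin n → ℝ), (∏ i : Fin n, (X - C (l i))).roots
        = Multiset.map l Finset.univ.val := by
      intro l
      rw [← Polynomial.roots_multiset_prod_X_sub_C (Multiset.map l Finset.univ.val)]
      congr 1
      rw [Multiset.map_map, Finset.prod_eq_multiset_prod]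
      rfl
    rw [← r1 l₁, ← r1 l₂, hpoly]
  -- sorted lists
  have hl : List.ofFn l₁ = List.ofFn l₂ := by
    have hperm : (List.ofFn l₁).Perm (List.ofFn l₂) := by
      rw [← Multiset.coe_eq_coe]
      have : ∀ (l : Fin n → ℝ), (↑(List.ofFn l) : Multiset ℝ) = Multiset.map l Finset.univ.val := by
        intro l
        rw [List.ofFn_eq_map]
        rfl
      rw [this l₁, this l₂, hms]
    have hsrt : ∀ (l : Fin n → ℝ), Antitone l → (List.ofFn l).Pairwise (· ≥ ·) := by
      intro l hl
      rw [List.pairwise_ofFn]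
      intro i j hij
      exact hl (le_of_lt hij)
    exact hperm.eq_of_pairwise (fun a b _ _ h1 h2 => le_antisymm h2 h1)
      (hsrt l₁ hA₁) (hsrt l₂ hA₂)
  funext i
  have := congrArg (fun L : List ℝ => L[i.val]?) hl
  simpa [List.getElem?_ofFn] using this
end
noncomputable section
variable {m n : ℕ}

/-- minner D as a continuous linear map. -/
def minnerCLM (D : Mat n) : Mat n →L[ℝ] ℝ :=
  LinearMap.toContinuousLinearMap
  { toFun := fun A => minner D A
    map_add' := by intro A B; simp [minner, Matrix.mul_add]
    map_smul' := by intro c A; simp [minner, Matrix.mul_smul] }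

lemma minnerCLM_apply (D A : Mat n) : minnerCLM D A = minner D A := rfl

lemma contDiff_minner_comp {g : Em m → Mat n} (hg : ContDiff ℝ 2 g) (D : Mat n) :
    ContDiff ℝ 2 (fun w => minner D (g w)) :=
  (minnerCLM D).contDiff.comp hg

lemma contDiff_Lfun {f : Em m → ℝ} {g : Em m → Mat n} (hf : ContDiff ℝ 2 f)
    (hg : ContDiff ℝ 2 g) (y : Mat n) : ContDiff ℝ 2 (fun w => Lfun f g w y) :=
  hf.add (contDiff_minner_comp hg y)

lemma gradient_add_of_contDiff {φ ψ : Em m → ℝ} (hφ : ContDiff ℝ 2 φ)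
    (hψ : ContDiff ℝ 2 ψ) (u : Em m) :
    gradient (fun w => φ w + ψ w) u = gradient φ u + gradient ψ u := by
  unfold gradient
  rw [fderiv_fun_add ((hφ.differentiable (by norm_num)) u)
    ((hψ.differentiable (by norm_num)) u)]
  simp

def dualSymmCLM (m : ℕ) : (Em m →L[ℝ] ℝ) →L[ℝ] Em m :=
  LinearMap.toContinuousLinearMap
  { toFun := fun L => (InnerProductSpace.toDual ℝ (Em m)).symm L
    map_add' := by intro a b; simp
    map_smul' := by intro c a; simp }

lemma differentiable_gradient_of_contDiff {φ : Em m → ℝ} (hφ : ContDiff ℝ 2 φ) :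
    Differentiable ℝ (fun u => gradient φ u) := by
  have h1 : ContDiff ℝ 1 (fderiv ℝ φ) := hφ.fderiv_right (by norm_num)
  have h2 : (fun u => gradient φ u) = (dualSymmCLM m) ∘ (fderiv ℝ φ) := rfl
  rw [h2]
  exact (dualSymmCLM m).differentiable.comp (h1.differentiable one_ne_zero)

lemma hessL_add {f : Em m → ℝ} {g : Em m → Mat n} (hf : ContDiff ℝ 2 f)
    (hg : ContDiff ℝ 2 g) (x : Em m) (y D : Mat n) :
    hessL f g x (y + D) = hessL f g x y +
      fderiv ℝ (fun u => gradient (fun w => minner D (g w)) u) x := by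
  have hφ := contDiff_Lfun hf hg y
  have hψ := contDiff_minner_comp hg D
  have hfun : (fun w => Lfun f g w (y + D)) =
      fun w => Lfun f g w y + minner D (g w) := by
    funext w
    simp only [Lfun, minner, Matrix.transpose_add, Matrix.add_mul, Matrix.trace_add]
    ring
  unfold hessL
  rw [hfun]
  have hgr : (fun u => gradient (fun w => Lfun f g w y + minner D (g w)) u) =
      fun u => gradient (fun w => Lfun f g w y) u +
        gradient (fun w => minner D (g w)) u := by
    funext u
    exact gradient_add_of_contDiff hφ hψ u
  rw [hgr]
  exact fderiv_add ((differentiable_gradient_of_contDiff hφ) x)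
    ((differentiable_gradient_of_contDiff hψ) x)

lemma hessL_smul_term {g : Em m → Mat n} (hg : ContDiff ℝ 2 g) (x : Em m)
    (D : Mat n) (ε : ℝ) :
    fderiv ℝ (fun u => gradient (fun w => minner (ε • D) (g w)) u) x =
      ε • fderiv ℝ (fun u => gradient (fun w => minner D (g w)) u) x := by
  have hψ := contDiff_minner_comp hg D
  have h1 : (fun w => minner (ε • D) (g w)) = fun w => ε • minner D (g w) := by
    funext w
    simp [minner, Matrix.transpose_smul, Matrix.smul_mul, Matrix.trace_smul, smul_eq_mul]
  rw [h1]
  have h2 : (fun u => gradient (fun w => ε • minner D (g w)) u) =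
      fun u => ε • gradient (fun w => minner D (g w)) u := by
    funext u
    unfold gradient
    rw [fderiv_fun_const_smul ((hψ.differentiable (by norm_num)) u)]
    simp
  rw [h2]
  exact fderiv_const_smul ((differentiable_gradient_of_contDiff hψ) x) ε
end

/-- Closedness of the uniform W-SOC across strata: if the W-SOC holds
uniformly on `U ∩ M̃_{p,q}` for an open `U`, then the W-SOC holds at every
`z ∈ U ∩ M̃_{p',q}` for every `0 ≤ p' ≤ p`. -/
theorem WSOC_closed_across_strata {m n p q : ℕ}
    (f : Em m → ℝ) (g : Em m → Mat n)
    (hf : ContDiff ℝ 2 f) (hg : ContDiff ℝ 2 g) (hgs : ∀ x, (g x).IsSymm)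
    (hpq : p + q ≤ n)
    (U : Set (Em m × Mat n)) (hU : IsOpen U)
    (h : UnifWSOC f g (U ∩ lstratum g p q)) :
    ∀ p' : ℕ, p' ≤ p → ∀ z ∈ U ∩ lstratum g p' q, WSOC f g z := by
  intro p' hp' z hz Pm lam hdec v hv happl
  obtain ⟨hzU, hzls⟩ := hz
  obtain ⟨hzsym, P₀, lam₀, hdec₀, hpos₀, hneg₀⟩ := hzls
  obtain ⟨c, hc, hmain⟩ := h
  have hleq : lam = lam₀ := eig_lam_unique hdec hdec₀
  have hanti : Antitone lam := hdec.2.1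
  have hpos : {i : Fin n | 0 < lam i}.ncard = p' := by rw [hleq]; exact hpos₀
  have hneg : {i : Fin n | lam i < 0}.ncard = q := by rw [hleq]; exact hneg₀
  have hposiff := antitone_pos_iff hanti hpos
  have hnonneg := antitone_nonneg_iff hanti hneg
  have hp'n : p' ≤ n := le_trans (le_trans hp' (Nat.le_add_right p q)) hpq
  have hzero : ∀ i : Fin n, p' ≤ i.val → i.val < p → lam i = 0 := by
    intro i h1 h2
    have hnp : ¬ 0 < lam i := by rw [hposiff i]; omega
    have hnn : 0 ≤ lam i := (hnonneg i).mpr (by omega)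
    linarith
  -- the bump direction
  set ind : Fin n → ℝ := fun i => if p' ≤ i.val ∧ i.val < p then 1 else 0 with hind
  set Dc : Mat n := Pm * Matrix.diagonal ind * Pmᵀ with hDc
  have hDcsymm : Dcᵀ = Dc := by
    rw [hDc, Matrix.transpose_mul, Matrix.transpose_mul, Matrix.transpose_transpose,
      Matrix.diagonal_transpose, ← Matrix.mul_assoc]
  -- epsilon bounds
  set εP : ℝ := if hp0 : 0 < p' then lam ⟨p' - 1, by omega⟩ else 1 with hεPdef
  have hεPpos : 0 < εP := by
    by_cases hp0 : 0 < p'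
    · rw [hεPdef, dif_pos hp0]
      exact (hposiff _).mpr (by simp; omega)
    · rw [hεPdef, dif_neg hp0]; norm_num
  have hεP_le : ∀ i : Fin n, i.val < p' → εP ≤ lam i := by
    intro i hi
    have hp0 : 0 < p' := by omega
    rw [hεPdef, dif_pos hp0]
    exact hanti (by rw [Fin.le_def]; simp; omega)
  obtain ⟨r, hr, hball⟩ := Metric.isOpen_iff.mp hU z hzU
  set εU : ℝ := r / (2 * (‖Dc‖ + 1)) with hεUdef
  have hεUpos : 0 < εU := by positivity
  set ε₀ : ℝ := min εP εU with hε₀def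
  have hε₀pos : 0 < ε₀ := lt_min hεPpos hεUpos
  -- the fixed correction term
  set K := fderiv ℝ (fun u => gradient (fun w => minner Dc (g w)) u) z.1 with hK
  set b : ℝ := ⟪v, K v⟫ with hb
  -- main perturbation estimate
  have hkey : ∀ ε : ℝ, 0 < ε → ε ≤ ε₀ → c * ‖v‖ ^ 2 ≤ Qform f g z Pm lam v + ε * b := by
    intro ε hε0 hεle
    have hεleP : ε ≤ εP := le_trans hεle (min_le_left _ _)
    have hεleU : ε ≤ εU := le_trans hεle (min_le_right _ _)
    set zε : Em m × Mat n := (z.1, z.2 + ε • Dc) with hzε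
    set lam' : Fin n → ℝ := fun i => lam i + ε * ind i with hlam'
    have hreg : ∀ i : Fin n, p' ≤ i.val → i.val < p → lam' i = ε := by
      intro i h1 h2
      rw [hlam']
      simp only [hind, if_pos (And.intro h1 h2), hzero i h1 h2]
      ring
    have hout : ∀ i : Fin n, ¬ (p' ≤ i.val ∧ i.val < p) → lam' i = lam i := by
      intro i hi
      rw [hlam']
      simp only [hind, if_neg hi]
      ring
    have hanti' : Antitone lam' := by
      intro i j hij
      have hijv : i.val ≤ j.val := hij
      by_cases hi : p' ≤ i.val ∧ i.val < p
      · rw [hreg i hi.1 hi.2]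
        by_cases hj2 : p' ≤ j.val ∧ j.val < p
        · rw [hreg j hj2.1 hj2.2]
        · have hjp : p ≤ j.val := by omega
          rw [hout j hj2]
          have : ¬ 0 < lam j := by rw [hposiff j]; omega
          linarith
      · by_cases hj2 : p' ≤ j.val ∧ j.val < p
        · have hip : i.val < p' := by omega
          rw [hout i hi, hreg j hj2.1 hj2.2]
          exact le_trans hεleP (hεP_le i hip)
        · rw [hout i hi, hout j hj2]
          exact hanti hij
    have hGzε : Gmap g zε = Pm * Matrix.diagonal lam' * Pmᵀ := by
      show g z.1 + (z.2 + ε • Dc) = _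
      rw [← add_assoc]
      have h2 : ε • Dc = Pm * Matrix.diagonal (fun i => ε * ind i) * Pmᵀ := by
        have hd : (Matrix.diagonal fun i => ε * ind i) = ε • Matrix.diagonal ind := by
          rw [← Matrix.diagonal_smul]; rfl
        rw [hDc, hd, Matrix.mul_smul, Matrix.smul_mul]
      have h3 : g z.1 + z.2 = Pm * Matrix.diagonal lam * Pmᵀ := hdec.2.2
      rw [h3, h2, ← Matrix.add_mul, ← Matrix.mul_add, ← Matrix.diagonal_add]
    have hdecε : IsEigDecomp (Gmap g zε) Pm lam' := ⟨hdec.1, hanti', hGzε⟩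
    have hneg' : ∀ i : Fin n, (lam' i < 0 ↔ lam i < 0) := by
      intro i
      by_cases hi : p' ≤ i.val ∧ i.val < p
      · rw [hreg i hi.1 hi.2, hzero i hi.1 hi.2]
        constructor <;> intro hcon <;> linarith
      · rw [hout i hi]
    have hzero' : ∀ i : Fin n, lam' i = 0 → lam i = 0 := by
      intro i hi
      by_cases hir : p' ≤ i.val ∧ i.val < p
      · rw [hreg i hir.1 hir.2] at hi; exact absurd hi (ne_of_gt hε0)
      · rw [hout i hir] at hi; exact hi
    have hpos' : ∀ i : Fin n, (0 < lam' i ↔ i.val < p) := by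
      intro i
      by_cases hi : p' ≤ i.val ∧ i.val < p
      · rw [hreg i hi.1 hi.2]
        exact ⟨fun _ => hi.2, fun _ => hε0⟩
      · rw [hout i hi, hposiff i]
        omega
    -- zε ∈ U
    have hzεU : zε ∈ U := by
      apply hball
      rw [Metric.mem_ball, Prod.dist_eq]
      have hd1 : dist zε.1 z.1 = 0 := by rw [hzε]; simp
      have hd2 : dist zε.2 z.2 = ε * ‖Dc‖ := by
        rw [hzε]
        show dist (z.2 + ε • Dc) z.2 = _
        rw [dist_eq_norm, add_sub_cancel_left, norm_smul, Real.norm_eq_abs,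
          abs_of_pos hε0]
      rw [hd1, hd2]
      have hN : (0:ℝ) ≤ ‖Dc‖ := norm_nonneg _
      have h5 : εU * (2 * (‖Dc‖ + 1)) = r := div_mul_cancel₀ _ (by positivity)
      have h6 : ε * ‖Dc‖ ≤ εU * ‖Dc‖ := mul_le_mul_of_nonneg_right hεleU hN
      have : ε * ‖Dc‖ < r := by nlinarith [mul_nonneg (le_of_lt hεUpos) hN]
      rw [max_lt_iff]
      exact ⟨hr, this⟩
    have hzεsym : zε.2.IsSymm := by
      show (z.2 + ε • Dc).IsSymm
      rw [Matrix.IsSymm, Matrix.transpose_add, Matrix.transpose_smul, hDcsymm, hzsym]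
    -- zε ∈ lstratum g p q
    have hzεls : zε ∈ lstratum g p q := by
      refine ⟨hzεsym, Pm, lam', hdecε, ?_, ?_⟩
      · have : {i : Fin n | 0 < lam' i} = {i : Fin n | i.val < p} := Set.ext hpos'
        rw [this]
        exact ncard_val_lt (by omega)
      · have : {i : Fin n | lam' i < 0} = {i : Fin n | lam i < 0} := Set.ext hneg'
        rw [this]
        exact hneg
    -- v ∈ appl(zε)
    have happl' : memAppl g zε Pm lam' v :=
      ⟨fun i j h1 h2 => happl.1 i j (hzero' i h1) (hzero' j h2),
       fun i j h1 h2 => happl.2.1 i j (hzero' i h1) ((hneg' j).mp h2),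
       fun i j h1 h2 => happl.2.2 i j ((hneg' i).mp h1) ((hneg' j).mp h2)⟩
    -- Qform relation
    have hhess : (⟪v, hessL f g z.1 (z.2 + ε • Dc) v⟫ : ℝ) =
        ⟪v, hessL f g z.1 z.2 v⟫ + ε * b := by
      rw [hessL_add hf hg z.1 z.2 (ε • Dc), hessL_smul_term hg z.1 Dc ε]
      rw [ContinuousLinearMap.add_apply, ContinuousLinearMap.smul_apply]
      rw [inner_add_right, real_inner_smul_right]
    have hsum : (∑ i : Fin n, ∑ j : Fin n,
          (if 0 < lam' i ∧ lam' j < 0 then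
            (-lam' j / lam' i) * ((Pmᵀ * fderiv ℝ g z.1 v * Pm) i j) ^ 2 else 0))
        = ∑ i : Fin n, ∑ j : Fin n,
          (if 0 < lam i ∧ lam j < 0 then
            (-lam j / lam i) * ((Pmᵀ * fderiv ℝ g z.1 v * Pm) i j) ^ 2 else 0) := by
      apply Finset.sum_congr rfl; intro i _
      apply Finset.sum_congr rfl; intro j _
      by_cases hj : lam j < 0
      · have hjr : ¬ (p' ≤ j.val ∧ j.val < p) := by
          rintro ⟨hj1, hj2⟩
          rw [hzero j hj1 hj2] at hj
          exact lt_irrefl 0 hj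
        have hj' : lam' j = lam j := hout j hjr
        by_cases hi : p' ≤ i.val ∧ i.val < p
        · have hMij : (Pmᵀ * fderiv ℝ g z.1 v * Pm) i j = 0 :=
            happl.2.1 i j (hzero i hi.1 hi.2) hj
          have : ¬ 0 < lam i := by rw [hposiff i]; omega
          rw [hMij, if_neg (fun hcon : 0 < lam i ∧ lam j < 0 => this hcon.1)]
          split_ifs with hcond
          · ring
          · rfl
        · rw [hout i hi, hj']
      · rw [if_neg (fun hcon => hj ((hneg' j).mp hcon.2)),
          if_neg (fun hcon => hj hcon.2)]
    have e1 : Qform f g zε Pm lam' v =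
        (⟪v, hessL f g z.1 (z.2 + ε • Dc) v⟫ : ℝ) + 2 * (∑ i : Fin n, ∑ j : Fin n,
          (if 0 < lam' i ∧ lam' j < 0 then
            (-lam' j / lam' i) * ((Pmᵀ * fderiv ℝ g z.1 v * Pm) i j) ^ 2 else 0)) := rfl
    have e2 : Qform f g z Pm lam v =
        (⟪v, hessL f g z.1 z.2 v⟫ : ℝ) + 2 * (∑ i : Fin n, ∑ j : Fin n,
          (if 0 < lam i ∧ lam j < 0 then
            (-lam j / lam i) * ((Pmᵀ * fderiv ℝ g z.1 v * Pm) i j) ^ 2 else 0)) := rfl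
    have hq : Qform f g zε Pm lam' v = Qform f g z Pm lam v + ε * b := by
      rw [e1, e2, hhess, hsum]; ring
    have := hmain zε ⟨hzεU, hzεls⟩ hzεsym Pm lam' hdecε v happl'
    rw [hq] at this
    exact this
  -- pass to the limit ε → 0⁺
  have hfinal : c * ‖v‖ ^ 2 ≤ Qform f g z Pm lam v := by
    by_contra hcon
    push_neg at hcon
    set a := Qform f g z Pm lam v with ha
    set δ : ℝ := c * ‖v‖ ^ 2 - a with hδ
    have hδpos : 0 < δ := by rw [hδ]; linarith
    set ε : ℝ := min ε₀ (δ / (2 * (|b| + 1))) with hε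
    have hε0 : 0 < ε := lt_min hε₀pos (by positivity)
    have h1 := hkey ε hε0 (min_le_left _ _)
    have h2 : ε * b ≤ ε * |b| := mul_le_mul_of_nonneg_left (le_abs_self b) (le_of_lt hε0)
    have h3 : ε ≤ δ / (2 * (|b| + 1)) := min_le_right _ _
    have h4 : ε * |b| ≤ (δ / (2 * (|b| + 1))) * |b| :=
      mul_le_mul_of_nonneg_right h3 (abs_nonneg b)
    have h5 : (δ / (2 * (|b| + 1))) * (2 * (|b| + 1)) = δ := div_mul_cancel₀ _ (by positivity)
    have ht : 0 < δ / (2 * (|b| + 1)) := by positivity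
    nlinarith [abs_nonneg b, mul_nonneg ht.le (abs_nonneg b)]
  have hvpos : 0 < ‖v‖ := norm_pos_iff.mpr hv
  have hQpos : 0 < Qform f g z Pm lam v :=
    lt_of_lt_of_le (mul_pos hc (pow_pos hvpos 2)) hfinal
  exact ne_of_gt hQpos
end
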